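/- Let T be an invertible measure-preserving transformation of a σ-finite measure space and suppose T is subsequence weakly rationally ergodic: there is a sweep-out set F of positive finite measure and a sequence nᵢ → ∞ such that for all measurable A, B ⊆ F, (1/a_{nᵢ}(F)) ∑_{k=0}^{nᵢ} μ(A ∩ T^k B) → μ(A)μ(B). If S is an invertible nonsingular transformation commuting with T such that μ(S(A)) = c·μ(A) for all measurable A (some constant c > 0), and the subsequence weak rational ergodicity property also holds on the set F ∪ SF, then c = 1, i.e., S is measure-preserving. -/

import Mathlib

open MeasureTheory Filter

/-- `a_n(F) = ∑_{k<n} μ(F ∩ T^k F) / μ(F)²`. -/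
noncomputable def aSum {X : Type*} [MeasurableSpace X] (μ : Measure X)
    (T : X → X) (F : Set X) (n : ℕ) : ℝ :=
  ∑ k ∈ Finset.range n, (μ (F ∩ T^[k] '' F)).toReal / (μ F).toReal ^ 2

/-- Subsequence weak rational ergodicity of `T` with respect to the set `F`
along the subsequence `ni`. -/
def SWRE {X : Type*} [MeasurableSpace X] (μ : Measure X)
    (T : X → X) (F : Set X) (ni : ℕ → ℕ) : Prop :=
  ∀ A B : Set X, MeasurableSet A → MeasurableSet B → A ⊆ F → B ⊆ F →
    Tendsto (fun i =>
        (∑ k ∈ Finset.range (ni i + 1), (μ (A ∩ T^[k] '' B)).toReal) / aSum μ T F (ni i))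
      atTop (nhds ((μ A).toReal * (μ B).toReal))

private lemma div_div_div_aux {x a b : ℝ} (hx : x ≠ 0) : (x / a) / (x / b) = b / a := by
  rcases eq_or_ne b 0 with hb | hb
  · simp [hb]
  rcases eq_or_ne a 0 with ha | ha
  · simp [ha]
  field_simp

/-- If `T` is subsequence weakly rationally ergodic and `S` is an invertible nonsingular
transformation commuting with `T` with `μ(S A) = c μ(A)`, and the subsequence weak rational
ergodicity property also holds on `F ∪ S F`, then `c = 1`, i.e. `S` is measure-preserving. -/
theorem stmt_3 {X : Type*} [MeasurableSpace X] (μ : Measure X) [SigmaFinite μ]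
    (T S : X → X) (hT : MeasurePreserving T μ μ) (hTbij : Function.Bijective T)
    (hSmeas : Measurable S) (hSbij : Function.Bijective S)
    (hcomm : S ∘ T = T ∘ S)
    (c : ℝ) (hc : 0 < c)
    (hSc : ∀ A : Set X, MeasurableSet A → μ (S '' A) = ENNReal.ofReal c * μ A)
    (F : Set X) (hF : MeasurableSet F) (hF0 : 0 < μ F) (hFfin : μ F < ⊤)
    (hsweep : μ (Set.univ \ ⋃ n : ℕ, T^[n] ⁻¹' F) = 0)
    (ni : ℕ → ℕ) (hni : Tendsto ni atTop atTop)
    (h1 : SWRE μ T F ni) (h2 : SWRE μ T (F ∪ S '' F) ni) :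
    c = 1 := by
  have hSinj := hSbij.injective
  have hSsurj := hSbij.surjective
  have hcE0 : ENNReal.ofReal c ≠ 0 := (ENNReal.ofReal_pos.mpr hc).ne'
  have hcEt : ENNReal.ofReal c ≠ ⊤ := ENNReal.ofReal_ne_top
  -- extended scaling to all sets
  have hSc' : ∀ W : Set X, μ (S '' W) = ENNReal.ofReal c * μ W := by
    intro W
    apply le_antisymm
    · calc μ (S '' W) ≤ μ (S '' toMeasurable μ W) :=
            measure_mono (Set.image_mono (subset_toMeasurable _ _))
        _ = ENNReal.ofReal c * μ (toMeasurable μ W) :=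
            hSc _ (measurableSet_toMeasurable _ _)
        _ = ENNReal.ofReal c * μ W := by rw [measure_toMeasurable]
    · have hM : MeasurableSet (toMeasurable μ (S '' W)) := measurableSet_toMeasurable _ _
      have hMS : μ (S '' (S ⁻¹' toMeasurable μ (S '' W)))
          = ENNReal.ofReal c * μ (S ⁻¹' toMeasurable μ (S '' W)) := hSc _ (hM.preimage hSmeas)
      rw [Set.image_preimage_eq _ hSsurj] at hMS
      have h2' : W ⊆ S ⁻¹' toMeasurable μ (S '' W) := fun x hx =>
        subset_toMeasurable _ _ ⟨x, hx, rfl⟩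
      calc ENNReal.ofReal c * μ W ≤ ENNReal.ofReal c * μ (S ⁻¹' toMeasurable μ (S '' W)) :=
            mul_le_mul_right (measure_mono h2') _
        _ = μ (toMeasurable μ (S '' W)) := hMS.symm
        _ = μ (S '' W) := measure_toMeasurable _
  -- the measurable hull of S '' F
  set N := toMeasurable μ (S '' F) with hNdef
  have hNmeas : MeasurableSet N := measurableSet_toMeasurable _ _
  have hμN : μ N = ENNReal.ofReal c * μ F := by
    rw [hNdef, measure_toMeasurable, hSc' F]
  have hFN : F ⊆ S ⁻¹' N := fun x hx => subset_toMeasurable _ _ ⟨x, hx, rfl⟩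
  have hpreN : μ (S ⁻¹' N) = μ F := by
    have h := hSc _ (hNmeas.preimage hSmeas)
    rw [Set.image_preimage_eq _ hSsurj, hμN] at h
    exact ((ENNReal.mul_right_inj hcE0 hcEt).mp h).symm
  have hdiff : μ (S ⁻¹' N \ F) = 0 := by
    rw [measure_diff hFN hF.nullMeasurableSet hFfin.ne, hpreN, tsub_self]
  have hNdiff : μ (N \ S '' F) = 0 := by
    have heq : N \ S '' F = S '' (S ⁻¹' N \ F) := by
      rw [Set.image_diff hSinj, Set.image_preimage_eq _ hSsurj]
    rw [heq, hSc', hdiff, mul_zero]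
  -- the good measurable subset K of S '' F
  set K := N \ toMeasurable μ (N \ S '' F) with hKdef
  have hKmeas : MeasurableSet K := hNmeas.diff (measurableSet_toMeasurable _ _)
  have hKsub : K ⊆ S '' F := by
    intro x hx
    by_contra h
    exact hx.2 (subset_toMeasurable _ _ ⟨hx.1, h⟩)
  have hμK : μ K = ENNReal.ofReal c * μ F := by
    rw [hKdef, measure_diff_null (by rw [measure_toMeasurable]; exact hNdiff), hμN]
  set D := S ⁻¹' K with hDdef
  have hDmeas : MeasurableSet D := hKmeas.preimage hSmeas
  have hDF : D ⊆ F := by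
    intro x hx
    obtain ⟨y, hy, hxy⟩ := hKsub hx
    rwa [← hSinj hxy]
  have hSD : S '' D = K := Set.image_preimage_eq _ hSsurj
  have hμD : μ D = μ F := by
    have h := hSc _ hDmeas
    rw [hSD, hμK] at h
    exact ((ENNReal.mul_right_inj hcE0 hcEt).mp h).symm
  -- commutation of S with iterates of T
  have hcommk : ∀ k : ℕ, S ∘ T^[k] = T^[k] ∘ S := by
    intro k
    have : Function.Commute S T := funext_iff.mp hcomm
    exact funext (this.iterate_right k)
  have hKk : ∀ k : ℕ, K ∩ T^[k] '' K = S '' (D ∩ T^[k] '' D) := by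
    intro k
    rw [Set.image_inter hSinj, hSD, ← Set.image_comp, hcommk k, Set.image_comp, hSD]
  have hterm : ∀ k : ℕ, (μ (K ∩ T^[k] '' K)).toReal = c * (μ (D ∩ T^[k] '' D)).toReal := by
    intro k
    rw [hKk k, hSc', ENNReal.toReal_mul, ENNReal.toReal_ofReal hc.le]
  -- real numbers
  set f := (μ F).toReal with hfdef
  have hf : 0 < f := ENNReal.toReal_pos hF0.ne' hFfin.ne
  set G := F ∪ S '' F with hGdef
  have hGfin : μ G < ⊤ := by
    calc μ G ≤ μ F + μ (S '' F) := measure_union_le _ _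
      _ = μ F + ENNReal.ofReal c * μ F := by rw [hSc' F]
      _ < ⊤ := by
        apply ENNReal.add_lt_top.mpr
        exact ⟨hFfin, ENNReal.mul_lt_top hcEt.lt_top hFfin⟩
  have hG0 : 0 < μ G := lt_of_lt_of_le hF0 (measure_mono Set.subset_union_left)
  have hg : 0 < (μ G).toReal := ENNReal.toReal_pos hG0.ne' hGfin.ne
  -- the four limits
  have t1 := h1 F F hF hF subset_rfl subset_rfl
  have t2 := h2 F F hF hF Set.subset_union_left Set.subset_union_left
  have t3 := h1 D D hDmeas hDmeas hDF hDF
  have t4 := h2 K K hKmeas hKmeas (hKsub.trans Set.subset_union_right)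
    (hKsub.trans Set.subset_union_right)
  rw [hμD] at t3
  have hμKr : (μ K).toReal = c * f := by
    rw [hμK, ENNReal.toReal_mul, ENNReal.toReal_ofReal hc.le]
  rw [hμKr] at t4
  -- positivity of the (F, F) numerator
  have hS'pos : ∀ i : ℕ, 0 < ∑ k ∈ Finset.range (ni i + 1), (μ (F ∩ T^[k] '' F)).toReal := by
    intro i
    apply Finset.sum_pos' (fun k _ => ENNReal.toReal_nonneg)
    refine ⟨0, Finset.mem_range.mpr (Nat.succ_pos _), ?_⟩
    simpa [Set.inter_self] using hf
  -- B / A → 1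
  have hff : f * f ≠ 0 := (mul_pos hf hf).ne'
  have hBA : Tendsto (fun i => aSum μ T G (ni i) / aSum μ T F (ni i)) atTop (nhds 1) := by
    have hdiv := t1.div t2 hff
    rw [div_self hff] at hdiv
    refine hdiv.congr fun i => ?_
    exact div_div_div_aux (hS'pos i).ne'
  -- rewrite t4 numerator as c * P i
  have t4' : Tendsto (fun i =>
      (c * ∑ k ∈ Finset.range (ni i + 1), (μ (D ∩ T^[k] '' D)).toReal) / aSum μ T G (ni i))
      atTop (nhds ((c * f) * (c * f))) := by
    refine t4.congr fun i => ?_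
    congr 1
    rw [Finset.mul_sum]
    exact Finset.sum_congr rfl fun k _ => hterm k
  -- combine: (c * P / B) * (B / A) → (c f)²; eventually equals c * P / A
  have hBpos : ∀ᶠ i in atTop, 0 < aSum μ T G (ni i) := by
    filter_upwards [hni.eventually_ge_atTop 1] with i hi
    unfold aSum
    apply Finset.sum_pos' (fun k _ => div_nonneg ENNReal.toReal_nonneg (by positivity))
    refine ⟨0, Finset.mem_range.mpr (lt_of_lt_of_le Nat.zero_lt_one hi), ?_⟩
    have : (G : Set X) ∩ T^[0] '' G = G := by simp [Set.inter_self]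
    rw [this]
    positivity
  have t6 : Tendsto (fun i =>
      (c * ∑ k ∈ Finset.range (ni i + 1), (μ (D ∩ T^[k] '' D)).toReal) / aSum μ T F (ni i))
      atTop (nhds ((c * f) * (c * f))) := by
    have tmul := t4'.mul hBA
    rw [mul_one] at tmul
    refine tmul.congr' ?_
    filter_upwards [hBpos] with i hi
    rw [div_mul_div_comm, mul_comm (aSum μ T G (ni i)) (aSum μ T F (ni i)),
      mul_div_mul_right _ _ hi.ne']
  have t7 : Tendsto (fun i =>
      (c * ∑ k ∈ Finset.range (ni i + 1), (μ (D ∩ T^[k] '' D)).toReal) / aSum μ T F (ni i))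
      atTop (nhds (c * (f * f))) := by
    have := t3.const_mul c
    refine this.congr fun i => ?_
    rw [mul_div_assoc]
  have hkey : (c * f) * (c * f) = c * (f * f) := tendsto_nhds_unique t6 t7
  have h' : (c * c) * (f * f) = c * (f * f) := by linear_combination hkey
  have hcc : c * c = c := mul_right_cancel₀ hff h'
  exact mul_left_cancel₀ hc.ne' (hcc.trans (mul_one c).symm)
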